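/- arXiv:2505.13632 — 3 statements merged into one kernel-verified Lean document; each statement's English description precedes it below -/
import Mathlib

section
/- Let d, N, M be positive integers, α > 0, and let cost functions E_m : ℝ^d × ℝ^{(M−1)d} → ℝ (m = 1,…,M) satisfy Assumptions (A1) and (A2). For a configuration X = (X^{m,i})_{m∈[M], i∈[N]} ∈ ℝ^{M·N·d}, set Z^j := (X^{j,1}+…+X^{j,N})/N and Z^{−m} := (Z^1,…,Z^{m−1},Z^{m+1},…,Z^M), and define F^{m,i}(X) := Σ_{j=1}^N [e^{−α E_m(X^{m,j}; Z^{−m})} / Σ_{k=1}^N e^{−α E_m(X^{m,k}; Z^{−m})}] · (X^{m,i} − X^{m,j}). Then for every R > 0 there exists a constant C > 0 (depending on R and N) such that |F^{m,i}(X) − F^{m,i}(Y)| ≤ C |X − Y| for all X, Y ∈ ℝ^{M·N·d} with |X| ≤ R and |Y| ≤ R. -/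
open MeasureTheory Finset
open scoped ENNReal NNReal

noncomputable section

/-- `ℝ^d` with the Euclidean norm. -/
abbrev Vec (d : ℕ) := EuclideanSpace ℝ (Fin d)

/-- `ℝ^{M·d}`, the space of opponents' strategies, with the Euclidean norm. -/
abbrev Opp (M d : ℕ) := EuclideanSpace ℝ (Fin M × Fin d)

/-- Euclidean norm of the concatenated vector `(x, y) ∈ ℝ^d × ℝ^{M·d}`. -/
def pairNorm {d M : ℕ} (x : Vec d) (y : Opp M d) : ℝ :=
  Real.sqrt (‖x‖ ^ 2 + ‖y‖ ^ 2)

/-- Given strategies `Z^1, …, Z^{M+1}`, the vector `Z^{-m}` of all strategies except the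
`m`-th one. -/
def oppOf {M d : ℕ} (m : Fin (M + 1)) (Z : Fin (M + 1) → Vec d) : Opp M d :=
  WithLp.toLp 2 fun p : Fin M × Fin d => Z (m.succAbove p.1) p.2

/-- The consensus point `X_α(ρ, Y) = (∫ x e^{-α E(x;Y)} dρ)/(∫ e^{-α E(x;Y)} dρ)`. -/
def consensus {d M : ℕ} (α : ℝ) (Em : Vec d → Opp M d → ℝ)
    (ρ : Measure (Vec d)) (Y : Opp M d) : Vec d :=
  (∫ x, Real.exp (-α * Em x Y) ∂ρ)⁻¹ • ∫ x, Real.exp (-α * Em x Y) • x ∂ρ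

/-- The mean `E[μ] = ∫ x dμ(x)` of a measure on `ℝ^d`. -/
def meanOf {d : ℕ} (μ : Measure (Vec d)) : Vec d := ∫ x, x ∂μ

/-- The empirical measure `(1/N) ∑_{i} δ_{X_i}`. -/
def empMeas {d N : ℕ} (X : Fin N → Vec d) : Measure (Vec d) :=
  (N : ℝ≥0∞)⁻¹ • ∑ i, Measure.dirac (X i)

/-- The `p`-Wasserstein distance, as an infimum over couplings. -/
def Wdist {d : ℕ} (p : ℝ) (μ ν : Measure (Vec d)) : ℝ :=
  (sInf { e : ℝ≥0∞ | ∃ π : Measure (Vec d × Vec d), IsProbabilityMeasure π ∧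
      π.map Prod.fst = μ ∧ π.map Prod.snd = ν ∧
      e = (∫⁻ z, (‖z.1 - z.2‖₊ : ℝ≥0∞) ^ p ∂π) ^ (1 / p) }).toReal

/-- Euclidean norm of a configuration `X = (X^{m,i}) ∈ ℝ^{(M+1)·N·d}`. -/
def confNorm {d M N : ℕ} (X : Fin (M + 1) → Fin N → Vec d) : ℝ :=
  Real.sqrt (∑ m, ∑ i, ‖X m i‖ ^ 2)

/-- The function `F^{m,i}` from the local Lipschitz lemma:
`F^{m,i}(X) = ∑_j (ω_j / ∑_k ω_k) • (X^{m,i} - X^{m,j})` where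
`ω_j = e^{-α E_m(X^{m,j}; Z^{-m})}` and `Z^j` is the average of `X^{j,1},…,X^{j,N}`. -/
def Fdiff {d M N : ℕ} (α : ℝ) (E : Fin (M + 1) → Vec d → Opp M d → ℝ)
    (m : Fin (M + 1)) (i : Fin N) (X : Fin (M + 1) → Fin N → Vec d) : Vec d :=
  let Z : Opp M d := oppOf m fun l => (N : ℝ)⁻¹ • ∑ k, X l k
  ∑ j, (Real.exp (-α * E m (X m j) Z) / ∑ k, Real.exp (-α * E m (X m k) Z)) •
    (X m i - X m j)

lemma pairNorm_nonneg {d M : ℕ} (x : Vec d) (y : Opp M d) : 0 ≤ pairNorm x y :=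
  Real.sqrt_nonneg _

lemma pairNorm_le {d M : ℕ} (x : Vec d) (y : Opp M d) : pairNorm x y ≤ ‖x‖ + ‖y‖ := by
  rw [pairNorm]
  have h : ‖x‖ ^ 2 + ‖y‖ ^ 2 ≤ (‖x‖ + ‖y‖) ^ 2 := by nlinarith [norm_nonneg x, norm_nonneg y]
  calc Real.sqrt (‖x‖ ^ 2 + ‖y‖ ^ 2) ≤ Real.sqrt ((‖x‖ + ‖y‖) ^ 2) := Real.sqrt_le_sqrt h
  _ = ‖x‖ + ‖y‖ := Real.sqrt_sq (by positivity)

lemma oppOf_sq {M d : ℕ} (m : Fin (M + 1)) (Z : Fin (M + 1) → Vec d) :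
    ‖oppOf m Z‖ ^ 2 = ∑ l : Fin M, ‖Z (m.succAbove l)‖ ^ 2 := by
  rw [EuclideanSpace.norm_eq, Real.sq_sqrt (by positivity), Fintype.sum_prod_type]
  refine Finset.sum_congr rfl fun l _ => ?_
  rw [EuclideanSpace.norm_eq, Real.sq_sqrt (by positivity)]
  rfl

lemma oppOf_norm_le {M d : ℕ} (m : Fin (M + 1)) (Z : Fin (M + 1) → Vec d) (b : ℝ)
    (hb0 : 0 ≤ b) (hb : ∀ l, ‖Z l‖ ≤ b) : ‖oppOf m Z‖ ≤ Real.sqrt M * b := by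
  have h1 : ‖oppOf m Z‖ ^ 2 ≤ (M : ℝ) * b ^ 2 := by
    rw [oppOf_sq]
    calc ∑ l : Fin M, ‖Z (m.succAbove l)‖ ^ 2 ≤ ∑ _l : Fin M, b ^ 2 :=
          Finset.sum_le_sum fun l _ => by
            have := hb (m.succAbove l); nlinarith [norm_nonneg (Z (m.succAbove l))]
      _ = (M : ℝ) * b ^ 2 := by simp [Finset.sum_const, mul_comm]
  have h2 : (Real.sqrt M * b) ^ 2 = (M : ℝ) * b ^ 2 := by
    rw [mul_pow, Real.sq_sqrt (by positivity)]
  nlinarith [norm_nonneg (oppOf m Z), Real.sqrt_nonneg (M : ℝ), mul_nonneg (Real.sqrt_nonneg (M:ℝ)) hb0]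

lemma oppOf_sub {M d : ℕ} (m : Fin (M + 1)) (Z W : Fin (M + 1) → Vec d) :
    oppOf m Z - oppOf m W = oppOf m (fun l => Z l - W l) := rfl

lemma confNorm_nonneg {d M N : ℕ} (X : Fin (M + 1) → Fin N → Vec d) : 0 ≤ confNorm X :=
  Real.sqrt_nonneg _

lemma norm_le_confNorm {d M N : ℕ} (X : Fin (M + 1) → Fin N → Vec d) (m : Fin (M + 1))
    (i : Fin N) : ‖X m i‖ ≤ confNorm X := by
  rw [confNorm]
  have h1 : ‖X m i‖ ^ 2 ≤ ∑ l, ∑ k, ‖X l k‖ ^ 2 := by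
    calc ‖X m i‖ ^ 2 ≤ ∑ k, ‖X m k‖ ^ 2 :=
          Finset.single_le_sum (f := fun k => ‖X m k‖ ^ 2) (fun k _ => by positivity) (Finset.mem_univ i)
      _ ≤ ∑ l, ∑ k, ‖X l k‖ ^ 2 :=
          Finset.single_le_sum (f := fun l => ∑ k, ‖X l k‖ ^ 2)
            (fun l _ => by positivity) (Finset.mem_univ m)
  calc ‖X m i‖ = Real.sqrt (‖X m i‖ ^ 2) := (Real.sqrt_sq (norm_nonneg _)).symm
    _ ≤ _ := Real.sqrt_le_sqrt h1

lemma mean_norm_le {d N : ℕ} (X : Fin N → Vec d) (b : ℝ) (hb0 : 0 ≤ b)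
    (hb : ∀ k, ‖X k‖ ≤ b) : ‖(N : ℝ)⁻¹ • ∑ k, X k‖ ≤ b := by
  rcases Nat.eq_zero_or_pos N with h | h
  · subst h; simp [hb0]
  rw [norm_smul]
  have h1 : ‖∑ k, X k‖ ≤ (N : ℝ) * b := by
    calc ‖∑ k, X k‖ ≤ ∑ k, ‖X k‖ := norm_sum_le _ _
      _ ≤ ∑ _k : Fin N, b := Finset.sum_le_sum fun k _ => hb k
      _ = (N : ℝ) * b := by simp [Finset.sum_const, mul_comm]
  have hN : (0 : ℝ) < N := by exact_mod_cast h
  rw [norm_inv, Real.norm_natCast]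
  calc (N : ℝ)⁻¹ * ‖∑ k, X k‖ ≤ (N : ℝ)⁻¹ * ((N : ℝ) * b) := by
        exact mul_le_mul_of_nonneg_left h1 (by positivity)
    _ = b := by field_simp

lemma exp_lip (A u v : ℝ) (hu : u ≤ A) (hv : v ≤ A) :
    |Real.exp u - Real.exp v| ≤ Real.exp A * |u - v| := by
  rcases le_total u v with h | h
  · rw [abs_of_nonpos (by simp [Real.exp_le_exp, h]), abs_of_nonpos (by linarith)]
    have h1 : 1 + (u - v) ≤ Real.exp (u - v) := by linarith [Real.add_one_le_exp (u - v)]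
    have h2 : Real.exp v * Real.exp (u - v) = Real.exp u := by
      rw [← Real.exp_add]; ring_nf
    have h3 : Real.exp v ≤ Real.exp A := Real.exp_le_exp.mpr hv
    nlinarith [Real.exp_pos v]
  · rw [abs_of_nonneg (by simp [Real.exp_le_exp, h]), abs_of_nonneg (by linarith)]
    have h1 : 1 + (v - u) ≤ Real.exp (v - u) := by linarith [Real.add_one_le_exp (v - u)]
    have h2 : Real.exp u * Real.exp (v - u) = Real.exp v := by
      rw [← Real.exp_add]; ring_nf
    have h3 : Real.exp u ≤ Real.exp A := Real.exp_le_exp.mpr hu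
    nlinarith [Real.exp_pos u]

set_option maxHeartbeats 1000000 in
/-- local Lipschitz continuity of `F^{m,i}`. -/
theorem stmt0 {d N M : ℕ} (hd : 0 < d) (hN : 0 < N)
    (α : ℝ) (hα : 0 < α)
    (E : Fin (M + 1) → Vec d → Opp M d → ℝ)
    -- Assumption (A1)
    (C₁ s : ℝ) (hC₁ : 0 < C₁) (hs : 0 ≤ s)
    (hA1 : ∀ (m : Fin (M + 1)) (x₀ x₁ : Vec d) (y₀ y₁ : Opp M d),
      |E m x₀ y₀ - E m x₁ y₁| ≤
        C₁ * (1 + pairNorm x₀ y₀ + pairNorm x₁ y₁) ^ s * pairNorm (x₀ - x₁) (y₀ - y₁))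
    -- Assumption (A2)
    (ℓ c G : ℝ) (hℓ : 0 ≤ ℓ) (hc : 0 < c) (hG : 0 < G)
    (hA2 : ∀ (m : Fin (M + 1)) (x : Vec d) (y : Opp M d),
      (1 / c) * (pairNorm x y ^ ℓ - G) ≤ E m x y ∧ E m x y ≤ c * (pairNorm x y ^ ℓ + G)) :
    ∀ R > (0 : ℝ), ∃ C > (0 : ℝ), ∀ (X Y : Fin (M + 1) → Fin N → Vec d),
      confNorm X ≤ R → confNorm Y ≤ R →
      ∀ (m : Fin (M + 1)) (i : Fin N),
        ‖Fdiff α E m i X - Fdiff α E m i Y‖ ≤ C * confNorm (X - Y) := by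
  intro R hR
  have hN' : (0 : ℝ) < N := by exact_mod_cast hN
  have hN1 : (1 : ℝ) ≤ N := by exact_mod_cast hN
  set B : ℝ := (1 + Real.sqrt M) * R with hBdef
  have hB0 : 0 < B := by positivity
  set A : ℝ := α * (c * (B ^ ℓ + G) + G / c) with hAdef
  have hBl : 0 ≤ B ^ ℓ := Real.rpow_nonneg hB0.le ℓ
  have hA0 : 0 < A := by
    have h1 : 0 < c * (B ^ ℓ + G) := mul_pos hc (by linarith)
    have h2 : 0 < G / c := div_pos hG hc
    exact mul_pos hα (by linarith)
  set L : ℝ := C₁ * (1 + 2 * B) ^ s with hLdef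
  have hL0 : 0 < L :=
    mul_pos hC₁ (Real.rpow_pos_of_pos (by linarith) s)
  set Lw : ℝ := Real.exp A * (α * (L * (1 + Real.sqrt M))) with hLwdef
  have hLw0 : 0 < Lw := by
    have h1 : (0:ℝ) < 1 + Real.sqrt M := by positivity
    exact mul_pos (Real.exp_pos A) (mul_pos hα (mul_pos hL0 h1))
  set Lr : ℝ := 2 * Real.exp (3 * A) * Lw with hLrdef
  have hLr0 : 0 < Lr := mul_pos (mul_pos two_pos (Real.exp_pos _)) hLw0
  refine ⟨2 * N * Lr * R + 2, by nlinarith [mul_pos (mul_pos hN' hLr0) hR], ?_⟩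
  intro X Y hX hY m i
  set D : ℝ := confNorm (X - Y) with hDdef
  have hD0 : 0 ≤ D := confNorm_nonneg _
  -- bounds on the entries and a generic boundedness pack
  have hEbound : ∀ (x : Vec d) (y : Opp M d), pairNorm x y ≤ B → |α * E m x y| ≤ A := by
    intro x y hp
    obtain ⟨hlo, hhi⟩ := hA2 m x y
    have h1 : pairNorm x y ^ ℓ ≤ B ^ ℓ :=
      Real.rpow_le_rpow (pairNorm_nonneg x y) hp hℓ
    have h2 : 0 ≤ pairNorm x y ^ ℓ := Real.rpow_nonneg (pairNorm_nonneg x y) ℓ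
    rw [abs_le]
    constructor
    · have h3 : α * ((1/c) * (pairNorm x y ^ ℓ - G)) ≤ α * E m x y :=
        mul_le_mul_of_nonneg_left hlo hα.le
      have e1 : α * ((1/c) * (pairNorm x y ^ ℓ - G)) =
          α * (1/c) * pairNorm x y ^ ℓ - α * (G / c) := by ring
      have h4 : 0 ≤ α * (1/c) * pairNorm x y ^ ℓ := by positivity
      have e2 : A = α * (c * (B ^ ℓ + G)) + α * (G / c) := by rw [hAdef]; ring
      have h5 : 0 ≤ α * (c * (B ^ ℓ + G)) :=
        mul_nonneg hα.le (mul_nonneg hc.le (by linarith))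
      linarith [e1 ▸ h3]
    · have h3 : α * E m x y ≤ α * (c * (pairNorm x y ^ ℓ + G)) :=
        mul_le_mul_of_nonneg_left hhi hα.le
      have h4 : α * (c * (pairNorm x y ^ ℓ + G)) ≤ α * (c * (B ^ ℓ + G)) := by
        have h6 := mul_le_mul_of_nonneg_left (mul_le_mul_of_nonneg_left h1 hc.le) hα.le
        linarith
      have h5 : 0 < α * (G / c) := by positivity
      have e2 : A = α * (c * (B ^ ℓ + G)) + α * (G / c) := by rw [hAdef]; ring
      linarith
  -- per-configuration data
  have config : ∀ W : Fin (M+1) → Fin N → Vec d, confNorm W ≤ R →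
      (∀ l k, ‖W l k‖ ≤ R) ∧
      ‖oppOf m (fun l => (N : ℝ)⁻¹ • ∑ k, W l k)‖ ≤ Real.sqrt M * R := by
    intro W hW
    have h1 : ∀ l k, ‖W l k‖ ≤ R := fun l k => (norm_le_confNorm W l k).trans hW
    exact ⟨h1, oppOf_norm_le _ _ R hR.le fun l => mean_norm_le _ R hR.le (h1 l)⟩
  obtain ⟨hXb, hZXb⟩ := config X hX
  obtain ⟨hYb, hZYb⟩ := config Y hY
  set ZX : Opp M d := oppOf m (fun l => (N : ℝ)⁻¹ • ∑ k, X l k) with hZXdef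
  set ZY : Opp M d := oppOf m (fun l => (N : ℝ)⁻¹ • ∑ k, Y l k) with hZYdef
  have hpX : ∀ j, pairNorm (X m j) ZX ≤ B := fun j => by
    calc pairNorm (X m j) ZX ≤ ‖X m j‖ + ‖ZX‖ := pairNorm_le _ _
      _ ≤ R + Real.sqrt M * R := add_le_add (hXb m j) hZXb
      _ = B := by rw [hBdef]; ring
  have hpY : ∀ j, pairNorm (Y m j) ZY ≤ B := fun j => by
    calc pairNorm (Y m j) ZY ≤ ‖Y m j‖ + ‖ZY‖ := pairNorm_le _ _
      _ ≤ R + Real.sqrt M * R := add_le_add (hYb m j) hZYb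
      _ = B := by rw [hBdef]; ring
  set wX : Fin N → ℝ := fun j => Real.exp (-α * E m (X m j) ZX) with hwXdef
  set wY : Fin N → ℝ := fun j => Real.exp (-α * E m (Y m j) ZY) with hwYdef
  set SX : ℝ := ∑ k, wX k with hSXdef
  set SY : ℝ := ∑ k, wY k with hSYdef
  have hwXmem : ∀ j, Real.exp (-A) ≤ wX j ∧ wX j ≤ Real.exp A := fun j => by
    have := hEbound (X m j) ZX (hpX j)
    rw [abs_le] at this
    constructor <;> · rw [hwXdef]; simp only
                      exact Real.exp_le_exp.mpr (by linarith [this.1, this.2])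
  have hwYmem : ∀ j, Real.exp (-A) ≤ wY j ∧ wY j ≤ Real.exp A := fun j => by
    have := hEbound (Y m j) ZY (hpY j)
    rw [abs_le] at this
    constructor <;> · rw [hwYdef]; simp only
                      exact Real.exp_le_exp.mpr (by linarith [this.1, this.2])
  have hSXlo : (N : ℝ) * Real.exp (-A) ≤ SX := by
    rw [hSXdef]
    calc (N : ℝ) * Real.exp (-A) = ∑ _k : Fin N, Real.exp (-A) := by
          simp [Finset.sum_const, mul_comm]
      _ ≤ ∑ k, wX k := Finset.sum_le_sum fun k _ => (hwXmem k).1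
  have hSYlo : (N : ℝ) * Real.exp (-A) ≤ SY := by
    rw [hSYdef]
    calc (N : ℝ) * Real.exp (-A) = ∑ _k : Fin N, Real.exp (-A) := by
          simp [Finset.sum_const, mul_comm]
      _ ≤ ∑ k, wY k := Finset.sum_le_sum fun k _ => (hwYmem k).1
  have hSYhi : SY ≤ (N : ℝ) * Real.exp A := by
    rw [hSYdef]
    calc ∑ k, wY k ≤ ∑ _k : Fin N, Real.exp A := Finset.sum_le_sum fun k _ => (hwYmem k).2
      _ = (N : ℝ) * Real.exp A := by simp [Finset.sum_const, mul_comm]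
  have hSX0 : 0 < SX := lt_of_lt_of_le (by positivity) hSXlo
  have hSY0 : 0 < SY := lt_of_lt_of_le (by positivity) hSYlo
  -- difference estimates
  have hdb : ∀ l k, ‖X l k - Y l k‖ ≤ D := by
    intro l k
    have := norm_le_confNorm (X - Y) l k
    simpa using this
  have hZd : ‖ZX - ZY‖ ≤ Real.sqrt M * D := by
    rw [hZXdef, hZYdef, oppOf_sub]
    have : (fun l => ((N : ℝ)⁻¹ • ∑ k, X l k) - ((N : ℝ)⁻¹ • ∑ k, Y l k)) =
        fun l => (N : ℝ)⁻¹ • ∑ k, (X l k - Y l k) := by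
      funext l
      rw [← smul_sub, ← Finset.sum_sub_distrib]
    rw [this]
    exact oppOf_norm_le _ _ D hD0 fun l => mean_norm_le _ D hD0 (hdb l)
  have hpd : ∀ j, pairNorm (X m j - Y m j) (ZX - ZY) ≤ (1 + Real.sqrt M) * D := fun j => by
    calc pairNorm (X m j - Y m j) (ZX - ZY) ≤ ‖X m j - Y m j‖ + ‖ZX - ZY‖ := pairNorm_le _ _
      _ ≤ D + Real.sqrt M * D := add_le_add (hdb m j) hZd
      _ = (1 + Real.sqrt M) * D := by ring
  have hEd : ∀ j, |E m (X m j) ZX - E m (Y m j) ZY| ≤ L * ((1 + Real.sqrt M) * D) := by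
    intro j
    have h1 := hA1 m (X m j) (Y m j) ZX ZY
    have h2 : (1 + pairNorm (X m j) ZX + pairNorm (Y m j) ZY) ^ s ≤ (1 + 2 * B) ^ s := by
      apply Real.rpow_le_rpow
      · linarith [pairNorm_nonneg (X m j) ZX, pairNorm_nonneg (Y m j) ZY]
      · linarith [hpX j, hpY j]
      · exact hs
    calc |E m (X m j) ZX - E m (Y m j) ZY| ≤
          C₁ * (1 + pairNorm (X m j) ZX + pairNorm (Y m j) ZY) ^ s *
            pairNorm (X m j - Y m j) (ZX - ZY) := h1
      _ ≤ C₁ * (1 + 2 * B) ^ s * ((1 + Real.sqrt M) * D) := by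
          apply mul_le_mul
          · exact mul_le_mul_of_nonneg_left h2 hC₁.le
          · exact hpd j
          · exact pairNorm_nonneg _ _
          · positivity
      _ = L * ((1 + Real.sqrt M) * D) := by rw [hLdef]
  have hwd : ∀ j, |wX j - wY j| ≤ Lw * D := by
    intro j
    have hu : -α * E m (X m j) ZX ≤ A := by
      have := hEbound (X m j) ZX (hpX j); rw [abs_le] at this; linarith [this.1]
    have hv : -α * E m (Y m j) ZY ≤ A := by
      have := hEbound (Y m j) ZY (hpY j); rw [abs_le] at this; linarith [this.1]
    have h1 := exp_lip A _ _ hu hv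
    have h2 : |(-α * E m (X m j) ZX) - (-α * E m (Y m j) ZY)| =
        α * |E m (X m j) ZX - E m (Y m j) ZY| := by
      have e : (-α * E m (X m j) ZX) - (-α * E m (Y m j) ZY) =
          α * (E m (Y m j) ZY - E m (X m j) ZX) := by ring
      rw [e, abs_mul, abs_of_pos hα, abs_sub_comm]
    rw [hwXdef, hwYdef]
    simp only
    calc |Real.exp (-α * E m (X m j) ZX) - Real.exp (-α * E m (Y m j) ZY)| ≤
          Real.exp A * |(-α * E m (X m j) ZX) - (-α * E m (Y m j) ZY)| := h1
      _ = Real.exp A * (α * |E m (X m j) ZX - E m (Y m j) ZY|) := by rw [h2]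
      _ ≤ Real.exp A * (α * (L * ((1 + Real.sqrt M) * D))) :=
          mul_le_mul_of_nonneg_left
            (mul_le_mul_of_nonneg_left (hEd j) hα.le) (Real.exp_pos A).le
      _ = Lw * D := by rw [hLwdef]; ring
  have hSd : |SX - SY| ≤ (N : ℝ) * (Lw * D) := by
    rw [hSXdef, hSYdef, ← Finset.sum_sub_distrib]
    calc |∑ k, (wX k - wY k)| ≤ ∑ k, |wX k - wY k| := Finset.abs_sum_le_sum_abs _ _
      _ ≤ ∑ _k : Fin N, Lw * D := Finset.sum_le_sum fun k _ => hwd k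
      _ = (N : ℝ) * (Lw * D) := by simp [Finset.sum_const, mul_comm]
  have hrd : ∀ j, |wX j / SX - wY j / SY| ≤ Lr * D := by
    intro j
    rw [div_sub_div _ _ hSX0.ne' hSY0.ne', abs_div, abs_of_pos (mul_pos hSX0 hSY0)]
    rw [div_le_iff₀ (mul_pos hSX0 hSY0)]
    have hnum : |wX j * SY - SX * wY j| ≤ 2 * (N : ℝ) * Real.exp A * (Lw * D) := by
      have e1 : wX j * SY - SX * wY j = (wX j - wY j) * SY + wY j * (SY - SX) := by ring
      rw [e1]
      calc |(wX j - wY j) * SY + wY j * (SY - SX)| ≤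
            |(wX j - wY j) * SY| + |wY j * (SY - SX)| := abs_add_le _ _
        _ = |wX j - wY j| * SY + wY j * |SY - SX| := by
            rw [abs_mul, abs_mul, abs_of_pos hSY0,
              abs_of_pos (lt_of_lt_of_le (Real.exp_pos _) (hwYmem j).1)]
        _ ≤ (Lw * D) * ((N : ℝ) * Real.exp A) + Real.exp A * ((N : ℝ) * (Lw * D)) := by
            have hS2 : |SY - SX| ≤ (N : ℝ) * (Lw * D) := by
              rw [abs_sub_comm]; exact hSd
            have t1 : |wX j - wY j| * SY ≤ (Lw * D) * ((N : ℝ) * Real.exp A) :=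
              mul_le_mul (hwd j) hSYhi hSY0.le (by positivity)
            have t2 : wY j * |SY - SX| ≤ Real.exp A * ((N : ℝ) * (Lw * D)) :=
              mul_le_mul (hwYmem j).2 hS2 (abs_nonneg _) (Real.exp_pos A).le
            linarith
        _ = 2 * (N : ℝ) * Real.exp A * (Lw * D) := by ring
    have hden : (N : ℝ) * Real.exp (-A) * ((N : ℝ) * Real.exp (-A)) ≤ SX * SY := by
      have h1 : (0:ℝ) < (N : ℝ) * Real.exp (-A) := by positivity
      exact mul_le_mul hSXlo hSYlo h1.le hSX0.le
    have hee : Real.exp (3 * A) * (Real.exp (-A) * Real.exp (-A)) = Real.exp A := by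
      rw [← Real.exp_add, ← Real.exp_add]
      ring_nf
    have key : 2 * (N : ℝ) * Real.exp A * (Lw * D) ≤ Lr * D * ((N : ℝ) * Real.exp (-A) * ((N : ℝ) * Real.exp (-A))) := by
      rw [hLrdef]
      have expand : 2 * Real.exp (3*A) * Lw * D * ((N : ℝ) * Real.exp (-A) * ((N : ℝ) * Real.exp (-A)))
          = 2 * (N:ℝ) * (N:ℝ) * Real.exp A * (Lw * D) := by
        rw [show (2:ℝ) * Real.exp (3*A) * Lw * D * ((N : ℝ) * Real.exp (-A) * ((N : ℝ) * Real.exp (-A)))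
            = 2 * (N:ℝ) * (N:ℝ) * (Real.exp (3*A) * (Real.exp (-A) * Real.exp (-A))) * (Lw * D) by ring, hee]
      rw [expand]
      have hNN : (N : ℝ) ≤ (N : ℝ) * (N : ℝ) := by nlinarith
      have base : (0:ℝ) ≤ 2 * Real.exp A * (Lw * D) := by positivity
      calc 2 * (N : ℝ) * Real.exp A * (Lw * D) = (N : ℝ) * (2 * Real.exp A * (Lw * D)) := by ring
        _ ≤ ((N : ℝ) * (N : ℝ)) * (2 * Real.exp A * (Lw * D)) :=
            mul_le_mul_of_nonneg_right hNN base
        _ = 2 * (N:ℝ) * (N:ℝ) * Real.exp A * (Lw * D) := by ring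
    calc |wX j * SY - SX * wY j| ≤ 2 * (N : ℝ) * Real.exp A * (Lw * D) := hnum
      _ ≤ Lr * D * ((N : ℝ) * Real.exp (-A) * ((N : ℝ) * Real.exp (-A))) := key
      _ ≤ Lr * D * (SX * SY) := by
          apply mul_le_mul_of_nonneg_left hden
          positivity
  -- assemble
  have hFX : Fdiff α E m i X = ∑ j, (wX j / SX) • (X m i - X m j) := rfl
  have hFY : Fdiff α E m i Y = ∑ j, (wY j / SY) • (Y m i - Y m j) := rfl
  rw [hFX, hFY, ← Finset.sum_sub_distrib]
  have hterm : ∀ j, ‖(wX j / SX) • (X m i - X m j) - (wY j / SY) • (Y m i - Y m j)‖ ≤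
      Lr * D * (2 * R) + (wY j / SY) * (2 * D) := by
    intro j
    have e1 : (wX j / SX) • (X m i - X m j) - (wY j / SY) • (Y m i - Y m j) =
        (wX j / SX - wY j / SY) • (X m i - X m j) +
          (wY j / SY) • ((X m i - X m j) - (Y m i - Y m j)) := by
      module
    rw [e1]
    have h1 : ‖(wX j / SX - wY j / SY) • (X m i - X m j)‖ ≤ Lr * D * (2 * R) := by
      rw [norm_smul, Real.norm_eq_abs]
      have hv : ‖X m i - X m j‖ ≤ 2 * R := by
        calc ‖X m i - X m j‖ ≤ ‖X m i‖ + ‖X m j‖ := norm_sub_le _ _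
          _ ≤ 2 * R := by linarith [hXb m i, hXb m j]
      exact mul_le_mul (hrd j) hv (norm_nonneg _) (by positivity)
    have h2 : ‖(wY j / SY) • ((X m i - X m j) - (Y m i - Y m j))‖ ≤ (wY j / SY) * (2 * D) := by
      rw [norm_smul, Real.norm_eq_abs,
        abs_of_pos (div_pos (lt_of_lt_of_le (Real.exp_pos _) (hwYmem j).1) hSY0)]
      apply mul_le_mul_of_nonneg_left _ (le_of_lt (div_pos (lt_of_lt_of_le (Real.exp_pos _) (hwYmem j).1) hSY0))
      have e2 : (X m i - X m j) - (Y m i - Y m j) = (X m i - Y m i) - (X m j - Y m j) := by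
        abel
      rw [e2]
      calc ‖(X m i - Y m i) - (X m j - Y m j)‖ ≤ ‖X m i - Y m i‖ + ‖X m j - Y m j‖ :=
            norm_sub_le _ _
        _ ≤ 2 * D := by linarith [hdb m i, hdb m j]
    exact (norm_add_le _ _).trans (add_le_add h1 h2)
  have hsum1 : ∑ j, wY j / SY = 1 := by
    rw [← Finset.sum_div, ← hSYdef, div_self hSY0.ne']
  calc ‖∑ j, ((wX j / SX) • (X m i - X m j) - (wY j / SY) • (Y m i - Y m j))‖ ≤
        ∑ j, ‖(wX j / SX) • (X m i - X m j) - (wY j / SY) • (Y m i - Y m j)‖ :=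
        norm_sum_le _ _
    _ ≤ ∑ j, (Lr * D * (2 * R) + (wY j / SY) * (2 * D)) :=
        Finset.sum_le_sum fun j _ => hterm j
    _ = (N : ℝ) * (Lr * D * (2 * R)) + (∑ j, wY j / SY) * (2 * D) := by
        rw [Finset.sum_add_distrib, Finset.sum_const, Finset.card_univ, Fintype.card_fin,
          nsmul_eq_mul, ← Finset.sum_mul]
    _ = (2 * N * Lr * R + 2) * D := by rw [hsum1]; ring
end
end

section
/- Let p ≥ 1, let ρ_1,…,ρ_M ∈ P_p(ℝ^d), let α > 0, and let the cost functions E_1,…,E_M satisfy Assumption (A2) with constants ℓ, c, G. Then there exists a constant C > 0 depending only on p, ℓ, c, G and M such that for all m ∈ [M], |X_α^m(ρ_m, M̄^{−m})| ≤ [∫_{ℝ^d} |x| e^{−α E_m(x; M̄^{−m})} dρ_m(x)] / [∫_{ℝ^d} e^{−α E_m(x; M̄^{−m})} dρ_m(x)] ≤ C ( Σ_{j=1}^M ∫_{ℝ^d} |x|^p dρ_j(x) )^{1/p}, where M̄ := (E[ρ_1],…,E[ρ_M]) and M̄^{−m} omits the m-th component. -/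
open MeasureTheory Finset
open scoped ENNReal NNReal

noncomputable section

lemma moment_facts {d : ℕ} (μ : Measure (Vec d)) [IsProbabilityMeasure μ] {p : ℝ} (hp : 1 ≤ p)
    (hmom : ∫⁻ x, (‖x‖₊ : ℝ≥0∞) ^ p ∂μ < ⊤) :
    Integrable (fun x : Vec d => ‖x‖) μ ∧ Integrable (fun x : Vec d => ‖x‖ ^ p) μ ∧
      ∫ x, ‖x‖ ∂μ ≤ (∫ x, ‖x‖ ^ p ∂μ) ^ (1/p) := by
  have hp0 : 0 < p := lt_of_lt_of_le one_pos hp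
  have hmeas : Measurable (fun x : Vec d => (‖x‖₊ : ℝ≥0∞)) := measurable_nnnorm.coe_nnreal_ennreal
  have hmeasp : Measurable (fun x : Vec d => (‖x‖₊ : ℝ≥0∞) ^ p) := hmeas.pow_const p
  have key : ∫⁻ x, (‖x‖₊ : ℝ≥0∞) ∂μ ≤ (∫⁻ x, (‖x‖₊ : ℝ≥0∞) ^ p ∂μ) ^ (1/p) := by
    rcases eq_or_lt_of_le hp with h1 | h1
    · simp [← h1]
    · have hconj : p.HolderConjugate (p/(p-1)) := Real.HolderConjugate.conjExponent h1
      have := ENNReal.lintegral_mul_le_Lp_mul_Lq μ hconj (f := fun x : Vec d => (‖x‖₊ : ℝ≥0∞))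
        (g := fun _ => 1) hmeas.aemeasurable aemeasurable_const
      simpa [measure_univ] using this
  have hL1 : ∫⁻ x, (‖x‖₊ : ℝ≥0∞) ∂μ < ⊤ :=
    lt_of_le_of_lt key (ENNReal.rpow_lt_top_of_nonneg (by positivity) hmom.ne)
  have hint1 : Integrable (fun x : Vec d => ‖x‖) μ := by
    have := integrable_toReal_of_lintegral_ne_top hmeas.aemeasurable hL1.ne
    simpa using this
  have hintp : Integrable (fun x : Vec d => ‖x‖ ^ p) μ := by
    have := integrable_toReal_of_lintegral_ne_top hmeasp.aemeasurable hmom.ne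
    refine this.congr (Filter.Eventually.of_forall fun x => ?_)
    simp [← ENNReal.toReal_rpow]
  have h1 : ∫ x, ‖x‖ ∂μ = (∫⁻ x, (‖x‖₊ : ℝ≥0∞) ∂μ).toReal := by
    rw [integral_eq_lintegral_of_nonneg_ae (Filter.Eventually.of_forall fun x => norm_nonneg x)
      hint1.aestronglyMeasurable]
    simp only [ofReal_norm]; rfl
  have h2 : ∫ x, ‖x‖ ^ p ∂μ = (∫⁻ x, (‖x‖₊ : ℝ≥0∞) ^ p ∂μ).toReal := by
    rw [integral_eq_lintegral_of_nonneg_ae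
      (Filter.Eventually.of_forall fun x => by positivity) hintp.aestronglyMeasurable]
    congr 1
    refine lintegral_congr fun x => ?_
    rw [← enorm_eq_nnnorm, ← ofReal_norm, ENNReal.ofReal_rpow_of_nonneg (norm_nonneg x) hp0.le]
  refine ⟨hint1, hintp, ?_⟩
  rw [h1, h2, ENNReal.toReal_rpow]
  exact ENNReal.toReal_mono (ENNReal.rpow_ne_top_of_nonneg (by positivity) hmom.ne) key

set_option maxHeartbeats 4000000 in
lemma aux_sq_bound (a b Mr S : ℝ) (hMr : 0 ≤ Mr) (hS : 0 ≤ S)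
    (ha : a^2 ≤ (2*S)^2) (hb : b^2 ≤ Mr*S^2) :
    a^2 + b^2 ≤ ((Mr+2)*S)^2 := by nlinarith [mul_nonneg hMr (sq_nonneg S), sq_nonneg (Mr*S)]

lemma aux_half (t u v : ℝ) (h2 : 2 ≤ u) (ht : 0 ≤ t) (hv : 0 < v)
    (h : u * v * t ≤ v) : t ≤ 1/2 := by nlinarith [mul_nonneg hv.le ht]

lemma aux_key (c G K SL : ℝ) (hc : 0 < c) (hG : 0 < G) (hK : 0 ≤ K) (hSL : 1 ≤ SL) :
    c * (c * (K * SL + G)) + G ≤ (2*c^2*K + 2*c^2*G + 2*G) * SL := by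
  nlinarith [mul_nonneg (mul_nonneg (sq_nonneg c) hK) (by linarith : (0:ℝ) ≤ SL),
    mul_nonneg (mul_nonneg (sq_nonneg c) hG.le) (by linarith : (0:ℝ) ≤ SL - 1),
    mul_nonneg hG.le (by linarith : (0:ℝ) ≤ SL - 1),
    mul_nonneg (mul_nonneg (sq_nonneg c) hG.le) (by linarith : (0:ℝ) ≤ SL),
    mul_nonneg hG.le (by linarith : (0:ℝ) ≤ SL)]

/-- bound on the consensus point via weighted moments. -/
theorem stmt6 {d M : ℕ} (hd : 0 < d)
    (p : ℝ) (hp : 1 ≤ p) (α : ℝ) (hα : 0 < α)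
    (E : Fin (M + 1) → Vec d → Opp M d → ℝ)
    (hE : ∀ m, Measurable (Function.uncurry (E m)))
    -- Assumption (A2)
    (ℓ c G : ℝ) (hℓ : 0 ≤ ℓ) (hc : 0 < c) (hG : 0 < G)
    (hA2 : ∀ (m : Fin (M + 1)) (x : Vec d) (y : Opp M d),
      (1 / c) * (pairNorm x y ^ ℓ - G) ≤ E m x y ∧ E m x y ≤ c * (pairNorm x y ^ ℓ + G)) :
    ∃ C > (0 : ℝ), ∀ (ρ : Fin (M + 1) → Measure (Vec d)),
      (∀ j, IsProbabilityMeasure (ρ j)) →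
      (∀ j, ∫⁻ x, (‖x‖₊ : ℝ≥0∞) ^ p ∂(ρ j) < ⊤) →
      ∀ m : Fin (M + 1),
        ‖consensus α (E m) (ρ m) (oppOf m fun j => meanOf (ρ j))‖ ≤
          (∫ x, ‖x‖ * Real.exp (-α * E m x (oppOf m fun j => meanOf (ρ j))) ∂(ρ m)) /
            (∫ x, Real.exp (-α * E m x (oppOf m fun j => meanOf (ρ j))) ∂(ρ m)) ∧
        (∫ x, ‖x‖ * Real.exp (-α * E m x (oppOf m fun j => meanOf (ρ j))) ∂(ρ m)) /
            (∫ x, Real.exp (-α * E m x (oppOf m fun j => meanOf (ρ j))) ∂(ρ m))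
          ≤ C * (∑ j, ∫ x, ‖x‖ ^ p ∂(ρ j)) ^ (1 / p) := by
  have hp0 : 0 < p := lt_of_lt_of_le one_pos hp
  set κ : ℝ := (M : ℝ) + 2 with hκdef
  have hκ1 : (1:ℝ) ≤ κ := by
    rw [hκdef]
    have : (0:ℝ) ≤ (M:ℝ) := Nat.cast_nonneg M
    linarith
  set W : ℝ := Real.exp (α * G / c) with hWdef
  set C0 : ℝ := Real.exp (α * (G + 1) / c) * Real.exp (α * c * (1 + G)) with hC0def
  set C1 : ℝ := 2 * W * Real.exp (α * c * (κ ^ ℓ + G)) with hC1def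
  set lam : ℝ := (2 * c * (c * κ ^ ℓ + c * G + G / c)) ^ (1/ℓ) with hlamdef
  have hκl : 0 ≤ κ ^ ℓ := Real.rpow_nonneg (by positivity) _
  have hlam0 : 0 ≤ lam := Real.rpow_nonneg (by positivity) _
  have hC0pos : 0 < C0 := by rw [hC0def]; positivity
  have hC1pos : 0 < C1 := by
    rw [hC1def, hWdef]
    exact mul_pos (mul_pos two_pos (Real.exp_pos _)) (Real.exp_pos _)
  refine ⟨C0 + C1 + lam + 2, by linarith, ?_⟩
  intro ρ hprob hmom m
  haveI : IsProbabilityMeasure (ρ m) := hprob m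
  set Y : Opp M d := oppOf m fun j => meanOf (ρ j) with hYdef
  set w : Vec d → ℝ := fun x => Real.exp (-α * E m x Y) with hwdef
  -- basic facts about w
  have hfmeas : Measurable (fun x : Vec d => E m x Y) :=
    (hE m).comp (measurable_id.prodMk measurable_const)
  have hwmeas : Measurable w := (Real.measurable_exp.comp (hfmeas.const_mul (-α)))
  have hw_pos : ∀ x, 0 < w x := fun x => Real.exp_pos _
  have hq0 : ∀ x : Vec d, 0 ≤ pairNorm x Y ^ ℓ :=
    fun x => Real.rpow_nonneg (Real.sqrt_nonneg _) _
  have hw_ub : ∀ x, w x ≤ Real.exp (-(α * ((pairNorm x Y)^ℓ - G) / c)) := by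
    intro x
    apply Real.exp_le_exp.mpr
    have h := (hA2 m x Y).1
    rw [neg_mul]
    have : α * ((1/c) * (pairNorm x Y ^ ℓ - G)) ≤ α * E m x Y :=
      mul_le_mul_of_nonneg_left h hα.le
    have heq : α * ((1/c) * (pairNorm x Y ^ ℓ - G)) = α * (pairNorm x Y ^ ℓ - G) / c := by ring
    linarith
  have hw_lb : ∀ x, Real.exp (-(α * (c * ((pairNorm x Y)^ℓ + G)))) ≤ w x := by
    intro x
    apply Real.exp_le_exp.mpr
    have h := (hA2 m x Y).2
    rw [neg_mul]
    have : α * E m x Y ≤ α * (c * (pairNorm x Y ^ ℓ + G)) := mul_le_mul_of_nonneg_left h hα.le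
    linarith
  have hw_le : ∀ x, w x ≤ W := by
    intro x
    refine (hw_ub x).trans (Real.exp_le_exp.mpr ?_)
    have h1 : α * G / c - -(α * ((pairNorm x Y)^ℓ - G) / c) = α * (pairNorm x Y ^ ℓ) / c := by
      ring
    have h2 : 0 ≤ α * (pairNorm x Y ^ ℓ) / c :=
      div_nonneg (mul_nonneg hα.le (hq0 x)) hc.le
    linarith
  have hwint : Integrable w (ρ m) := by
    refine (integrable_const W).mono' hwmeas.aestronglyMeasurable
      (Filter.Eventually.of_forall fun x => ?_)
    rw [Real.norm_eq_abs, abs_of_pos (hw_pos x)]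
    exact hw_le x
  -- moment facts
  have momf := fun j => @moment_facts d (ρ j) (hprob j) p hp (hmom j)
  have hnint : ∀ j, Integrable (fun x : Vec d => ‖x‖) (ρ j) := fun j => (momf j).1
  have hpint : ∀ j, Integrable (fun x : Vec d => ‖x‖ ^ p) (ρ j) := fun j => (momf j).2.1
  set T : ℝ := ∑ j, ∫ x, ‖x‖ ^ p ∂(ρ j) with hTdef
  have hmomnn : ∀ j, 0 ≤ ∫ x, ‖x‖ ^ p ∂(ρ j) :=
    fun j => integral_nonneg fun x => by positivity
  have hT0 : 0 ≤ T := Finset.sum_nonneg fun j _ => hmomnn j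
  set S : ℝ := T ^ (1/p) with hSdef
  have hS0 : 0 ≤ S := Real.rpow_nonneg hT0 _
  have hSp : S ^ p = T := by
    rw [hSdef, one_div, Real.rpow_inv_rpow hT0 (ne_of_gt hp0)]
  have hjS : ∀ j, ∫ x, ‖x‖ ∂(ρ j) ≤ S := by
    intro j
    refine ((momf j).2.2).trans ?_
    exact Real.rpow_le_rpow (hmomnn j) (Finset.single_le_sum (fun i _ => hmomnn i)
      (Finset.mem_univ j)) (by positivity)
  have hmean : ∀ j, ‖meanOf (ρ j)‖ ≤ S :=
    fun j => (norm_integral_le_integral_norm _).trans (hjS j)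
  -- norm of Y
  have hY2 : ‖Y‖^2 ≤ (M : ℝ) * S^2 := by
    have hY2eq : ‖Y‖^2 = ∑ j : Fin M, ∑ k : Fin d, ‖Y (j, k)‖^2 := by
      rw [EuclideanSpace.norm_eq, Real.sq_sqrt (by positivity), Fintype.sum_prod_type]
    have hcoord : ∀ j : Fin M, ∑ k : Fin d, ‖Y (j, k)‖^2 = ‖meanOf (ρ (m.succAbove j))‖^2 := by
      intro j
      rw [EuclideanSpace.norm_eq, Real.sq_sqrt (by positivity)]
      rfl
    rw [hY2eq]
    calc ∑ j : Fin M, ∑ k : Fin d, ‖Y (j, k)‖^2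
        = ∑ j : Fin M, ‖meanOf (ρ (m.succAbove j))‖^2 := by
          exact Finset.sum_congr rfl fun j _ => hcoord j
      _ ≤ ∑ _j : Fin M, S^2 := Finset.sum_le_sum fun j _ =>
          pow_le_pow_left₀ (norm_nonneg _) (hmean _) 2
      _ = (M : ℝ) * S^2 := by simp [mul_comm]
  have hpair_ge : ∀ x : Vec d, ‖x‖ ≤ pairNorm x Y := by
    intro x
    have h1 : ‖x‖^2 ≤ ‖x‖^2 + ‖Y‖^2 := le_add_of_nonneg_right (sq_nonneg ‖Y‖)
    have h2 := Real.sqrt_le_sqrt h1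
    rwa [Real.sqrt_sq (norm_nonneg x)] at h2
  have hpair_le : ∀ x : Vec d, ‖x‖ ≤ 2*S → pairNorm x Y ≤ κ * S := by
    intro x hx
    have hxsq : ‖x‖^2 ≤ (2*S)^2 := pow_le_pow_left₀ (norm_nonneg x) hx 2
    have hM0 : (0:ℝ) ≤ (M:ℝ) := Nat.cast_nonneg M
    have hmain : ‖x‖^2 + ‖Y‖^2 ≤ (κ*S)^2 := by
      rw [hκdef]
      exact aux_sq_bound ‖x‖ ‖Y‖ (M:ℝ) S hM0 hS0 hxsq hY2
    calc pairNorm x Y ≤ Real.sqrt ((κ*S)^2) := Real.sqrt_le_sqrt hmain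
      _ = κ*S := Real.sqrt_sq (mul_nonneg (le_trans zero_le_one hκ1) hS0)
  -- the two integrals
  set D : ℝ := ∫ x, Real.exp (-α * E m x Y) ∂(ρ m) with hDdef
  set N : ℝ := ∫ x, ‖x‖ * Real.exp (-α * E m x Y) ∂(ρ m) with hNdef
  have hDw : D = ∫ x, w x ∂(ρ m) := rfl
  have hNw : N = ∫ x, ‖x‖ * w x ∂(ρ m) := rfl
  have hD0 : 0 ≤ D := integral_nonneg fun x => (hw_pos x).le
  have hDpos : 0 < D := by
    rw [hDw]
    refine (integral_pos_iff_support_of_nonneg_ae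
      (Filter.Eventually.of_forall fun x => (hw_pos x).le) hwint).mpr ?_
    have : Function.support w = Set.univ := Set.eq_univ_of_forall fun x => (hw_pos x).ne'
    rw [this]
    simp
  have h1int : Integrable (fun x => ‖x‖ * w x) (ρ m) := by
    refine ((hnint m).const_mul W).mono'
      ((measurable_norm.mul hwmeas).aestronglyMeasurable)
      (Filter.Eventually.of_forall fun x => ?_)
    rw [Real.norm_eq_abs, abs_of_nonneg (mul_nonneg (norm_nonneg x) (hw_pos x).le)]
    calc ‖x‖ * w x ≤ ‖x‖ * W := mul_le_mul_of_nonneg_left (hw_le x) (norm_nonneg x)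
      _ = W * ‖x‖ := mul_comm _ _
  have hN0 : 0 ≤ N := integral_nonneg fun x => mul_nonneg (norm_nonneg x) (hw_pos x).le
  have hNup : N ≤ W * S := by
    rw [hNw]
    calc ∫ x, ‖x‖ * w x ∂(ρ m) ≤ ∫ x, W * ‖x‖ ∂(ρ m) := by
          refine integral_mono h1int ((hnint m).const_mul W) fun x => ?_
          calc ‖x‖ * w x ≤ ‖x‖ * W := mul_le_mul_of_nonneg_left (hw_le x) (norm_nonneg x)
            _ = W * ‖x‖ := mul_comm _ _
      _ = W * ∫ x, ‖x‖ ∂(ρ m) := integral_const_mul _ _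
      _ ≤ W * S := mul_le_mul_of_nonneg_left (hjS m) (Real.exp_pos _).le
  constructor
  · -- first inequality
    have hnormle : ‖∫ x, Real.exp (-α * E m x Y) • x ∂(ρ m)‖ ≤ N := by
      refine (norm_integral_le_integral_norm _).trans_eq ?_
      rw [hNw]
      refine integral_congr_ae (Filter.Eventually.of_forall fun x => ?_)
      show ‖Real.exp (-α * E m x Y) • x‖ = ‖x‖ * w x
      rw [norm_smul, Real.norm_eq_abs, abs_of_pos (Real.exp_pos _), mul_comm]
    show ‖consensus α (E m) (ρ m) Y‖ ≤ N / D
    unfold consensus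
    rw [← hDdef, norm_smul, Real.norm_eq_abs, abs_of_nonneg (inv_nonneg.mpr hD0)]
    calc D⁻¹ * ‖∫ x, Real.exp (-α * E m x Y) • x ∂(ρ m)‖ ≤ D⁻¹ * N :=
          mul_le_mul_of_nonneg_left hnormle (inv_nonneg.mpr hD0)
      _ = N / D := by rw [div_eq_mul_inv, mul_comm]
  · -- second inequality
    clear_value κ W C0 C1 lam Y w T S D N
    rw [div_le_iff₀ hDpos]
    rcases eq_or_lt_of_le hℓ with hl0 | hlpos
    · -- case ℓ = 0
      have hq1 : ∀ x : Vec d, pairNorm x Y ^ ℓ = 1 := fun x => by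
        rw [← hl0, Real.rpow_zero]
      have hNup0 : N ≤ Real.exp (α * (G + 1) / c) * S := by
        rw [hNw]
        have hptw : ∀ x : Vec d, ‖x‖ * w x ≤ Real.exp (α * (G + 1) / c) * ‖x‖ := by
          intro x
          have h1 : w x ≤ Real.exp (α * (G + 1) / c) := by
            refine (hw_ub x).trans (Real.exp_le_exp.mpr ?_)
            rw [hq1 x]
            have h2 : α * (G + 1) / c - -(α * (1 - G) / c) = 2 * α / c := by ring
            have h3 : 0 ≤ 2 * α / c := by positivity
            linarith
          calc ‖x‖ * w x ≤ ‖x‖ * Real.exp (α * (G + 1) / c) :=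
                mul_le_mul_of_nonneg_left h1 (norm_nonneg x)
            _ = Real.exp (α * (G + 1) / c) * ‖x‖ := mul_comm _ _
        calc ∫ x, ‖x‖ * w x ∂(ρ m) ≤ ∫ x, Real.exp (α * (G + 1) / c) * ‖x‖ ∂(ρ m) :=
              integral_mono h1int ((hnint m).const_mul _) hptw
          _ = Real.exp (α * (G + 1) / c) * ∫ x, ‖x‖ ∂(ρ m) := integral_const_mul _ _
          _ ≤ Real.exp (α * (G + 1) / c) * S :=
              mul_le_mul_of_nonneg_left (hjS m) (Real.exp_pos _).le
      have hDlow : Real.exp (-(α * c * (1 + G))) ≤ D := by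
        rw [hDw]
        calc Real.exp (-(α * c * (1 + G)))
            = ∫ _x, Real.exp (-(α * c * (1 + G))) ∂(ρ m) := by simp
          _ ≤ ∫ x, w x ∂(ρ m) := by
              refine integral_mono (integrable_const _) hwint fun x => ?_
              refine le_trans (Real.exp_le_exp.mpr ?_) (hw_lb x)
              rw [hq1 x]
              exact le_of_eq (by ring)
      have hC0e : C0 * Real.exp (-(α * c * (1 + G))) = Real.exp (α * (G + 1) / c) := by
        rw [hC0def, mul_assoc, ← Real.exp_add]
        simp
      have hfin : N ≤ C0 * S * D := by
        calc N ≤ Real.exp (α * (G + 1) / c) * S := hNup0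
          _ = C0 * Real.exp (-(α * c * (1 + G))) * S := by rw [hC0e]
          _ ≤ C0 * D * S :=
              mul_le_mul_of_nonneg_right (mul_le_mul_of_nonneg_left hDlow hC0pos.le) hS0
          _ = C0 * S * D := by ring
      refine hfin.trans ?_
      rw [mul_assoc, mul_assoc]
      exact mul_le_mul_of_nonneg_right (by linarith) (mul_nonneg hS0 hD0)
    · -- case ℓ > 0
      rcases eq_or_lt_of_le hS0 with hSz | hSpos
      · -- S = 0
        have hnm : ∫ x, ‖x‖ ∂(ρ m) = 0 :=
          le_antisymm (by linarith [hjS m]) (integral_nonneg fun x => norm_nonneg x)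
        have hae : (fun x : Vec d => ‖x‖) =ᵐ[ρ m] 0 :=
          (integral_eq_zero_iff_of_nonneg (fun x => norm_nonneg x) (hnint m)).1 hnm
        have hNzero : N = 0 := by
          rw [hNw]
          refine integral_eq_zero_of_ae (hae.mono fun x hx => ?_)
          simp only [Pi.zero_apply] at hx ⊢
          rw [hx, zero_mul]
        rw [hNzero, ← hSz]
        simp
      · -- S > 0 : Markov
        set A : Set (Vec d) := {x | ‖x‖ ≤ 2*S} with hAdef
        have hAmeas : MeasurableSet A := measurableSet_le measurable_norm measurable_const
        have hAc : ∀ x : Vec d, x ∈ Aᶜ ↔ 2*S < ‖x‖ := by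
          intro x; simp [hAdef, not_le]
        have hmarkov : (2*S)^p * (ρ m Aᶜ).toReal ≤ S^p := by
          have h1 : (2*S)^p * (ρ m Aᶜ).toReal ≤ ∫ x in Aᶜ, ‖x‖^p ∂(ρ m) := by
            refine le_trans (le_of_eq (mul_comm _ _)) <| setIntegral_ge_of_const_le (c := (2*S)^p) hAmeas.compl (measure_ne_top _ _) (fun x hx => ?_)
              (hpint m).integrableOn
            exact Real.rpow_le_rpow (by linarith) ((hAc x).1 hx).le hp0.le
          have h2 : ∫ x in Aᶜ, ‖x‖^p ∂(ρ m) ≤ ∫ x, ‖x‖^p ∂(ρ m) :=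
            setIntegral_le_integral (hpint m) (Filter.Eventually.of_forall fun x => by positivity)
          have h3 : ∫ x, ‖x‖^p ∂(ρ m) ≤ T := by
            rw [hTdef]
            exact Finset.single_le_sum (fun i _ => hmomnn i) (Finset.mem_univ m)
          linarith [hSp]
        have hcompl : (ρ m Aᶜ).toReal ≤ 1/2 := by
          have h2p : (2:ℝ) ≤ (2:ℝ)^p := by
            calc (2:ℝ) = 2^(1:ℝ) := (Real.rpow_one 2).symm
              _ ≤ 2^p := Real.rpow_le_rpow_of_exponent_le one_le_two hp
          have hSppos : 0 < S^p := Real.rpow_pos_of_pos hSpos p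
          have hsplit2 : (2*S)^p = 2^p * S^p := Real.mul_rpow (by norm_num) hS0
          refine aux_half _ _ _ h2p ENNReal.toReal_nonneg hSppos ?_
          rw [← hsplit2]
          exact hmarkov
        have hhalf : 1/2 ≤ (ρ m A).toReal := by
          have hsum := measure_add_measure_compl (μ := ρ m) hAmeas
          rw [measure_univ] at hsum
          have h1 : (ρ m A).toReal + (ρ m Aᶜ).toReal = 1 := by
            rw [← ENNReal.toReal_add (measure_ne_top _ _) (measure_ne_top _ _), hsum,
              ENNReal.toReal_one]
          linarith
        have hinfA : ∀ x ∈ A, Real.exp (-(α * (c * ((κ*S)^ℓ + G)))) ≤ w x := by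
          intro x hx
          refine le_trans (Real.exp_le_exp.mpr ?_) (hw_lb x)
          have hq : pairNorm x Y ^ ℓ ≤ (κ*S)^ℓ :=
            Real.rpow_le_rpow (Real.sqrt_nonneg _) (hpair_le x hx) hℓ
          exact neg_le_neg (mul_le_mul_of_nonneg_left
            (mul_le_mul_of_nonneg_left (add_le_add_left hq G) hc.le) hα.le)
        have hDlowS : Real.exp (-(α * (c * ((κ*S)^ℓ + G)))) * (1/2) ≤ D := by
          rw [hDw]
          calc Real.exp (-(α * (c * ((κ*S)^ℓ + G)))) * (1/2)
              ≤ Real.exp (-(α * (c * ((κ*S)^ℓ + G)))) * (ρ m A).toReal :=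
                mul_le_mul_of_nonneg_left hhalf (Real.exp_pos _).le
            _ ≤ ∫ x in A, w x ∂(ρ m) :=
                (le_of_eq (mul_comm _ _)).trans (setIntegral_ge_of_const_le hAmeas (measure_ne_top _ _) hinfA hwint.integrableOn)
            _ ≤ ∫ x, w x ∂(ρ m) :=
                setIntegral_le_integral hwint (Filter.Eventually.of_forall fun x => (hw_pos x).le)
        rcases le_or_gt S 1 with hS1 | hS1
        · -- S ≤ 1
          have hκSl : (κ*S)^ℓ ≤ κ^ℓ := by
            refine Real.rpow_le_rpow (mul_nonneg (by linarith) hS0) ?_ hℓ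
            have h6 : κ*S ≤ κ*1 := mul_le_mul_of_nonneg_left hS1 (le_trans zero_le_one hκ1)
            simpa using h6
          have hDlow1 : Real.exp (-(α * c * (κ^ℓ + G))) * (1/2) ≤ D := by
            refine le_trans (mul_le_mul_of_nonneg_right (Real.exp_le_exp.mpr ?_) (by norm_num))
              hDlowS
            have h6 : α * (c * ((κ*S)^ℓ + G)) ≤ α * (c * (κ^ℓ + G)) :=
              mul_le_mul_of_nonneg_left
                (mul_le_mul_of_nonneg_left (add_le_add_left hκSl G) hc.le) hα.le
            have h7 : α * (c * (κ^ℓ + G)) = α * c * (κ^ℓ + G) := by ring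
            linarith
          have hC1e : C1 * (Real.exp (-(α * c * (κ^ℓ + G))) * (1/2)) = W := by
            rw [hC1def, show 2 * W * Real.exp (α * c * (κ ^ ℓ + G)) *
                (Real.exp (-(α * c * (κ ^ ℓ + G))) * (1/2)) =
                W * (Real.exp (α * c * (κ ^ ℓ + G)) * Real.exp (-(α * c * (κ ^ ℓ + G))))
              from by ring, ← Real.exp_add]
            simp
          have hfin : N ≤ C1 * S * D := by
            calc N ≤ W * S := hNup
              _ = C1 * (Real.exp (-(α * c * (κ^ℓ + G))) * (1/2)) * S := by rw [hC1e]
              _ ≤ C1 * D * S :=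
                  mul_le_mul_of_nonneg_right (mul_le_mul_of_nonneg_left hDlow1 hC1pos.le) hS0
              _ = C1 * S * D := by ring
          refine hfin.trans ?_
          rw [mul_assoc, mul_assoc]
          exact mul_le_mul_of_nonneg_right (by linarith) (mul_nonneg hS0 hD0)
        · -- S > 1
          have hSl1 : (1:ℝ) ≤ S^ℓ := by
            calc (1:ℝ) = 1^ℓ := (Real.one_rpow ℓ).symm
              _ ≤ S^ℓ := Real.rpow_le_rpow zero_le_one hS1.le hℓ
          have hSl0 : (0:ℝ) ≤ S^ℓ := by linarith
          have hlamL : lam^ℓ = 2 * c * (c * κ ^ ℓ + c * G + G / c) := by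
            rw [hlamdef, one_div, Real.rpow_inv_rpow (by positivity) (ne_of_gt hlpos)]
          set R : ℝ := lam * S with hRdef
          have hR0 : 0 ≤ R := mul_nonneg hlam0 hS0
          set B : Set (Vec d) := {x | ‖x‖ ≤ R} with hBdef
          have hBmeas : MeasurableSet B := measurableSet_le measurable_norm measurable_const
          have hsplit : N = (∫ x in B, ‖x‖ * w x ∂(ρ m)) + ∫ x in Bᶜ, ‖x‖ * w x ∂(ρ m) := by
            rw [hNw, ← integral_add_compl hBmeas h1int]
          have hin : ∫ x in B, ‖x‖ * w x ∂(ρ m) ≤ R * D := by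
            calc ∫ x in B, ‖x‖ * w x ∂(ρ m) ≤ ∫ x in B, R * w x ∂(ρ m) := by
                  refine setIntegral_mono_on h1int.integrableOn
                    (hwint.const_mul R).integrableOn hBmeas fun x hx => ?_
                  exact mul_le_mul_of_nonneg_right hx (hw_pos x).le
              _ = R * ∫ x in B, w x ∂(ρ m) := integral_const_mul _ _
              _ ≤ R * D := by
                  rw [hDw]
                  exact mul_le_mul_of_nonneg_left (setIntegral_le_integral hwint
                    (Filter.Eventually.of_forall fun x => (hw_pos x).le)) hR0
          have hKexp : ∀ x ∈ Bᶜ, w x ≤ Real.exp (-(α * (c * ((κ*S)^ℓ + G)))) := by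
            intro x hx
            have hxR : R ≤ ‖x‖ := le_of_lt (by simpa [hBdef, not_le] using hx)
            have hq : R^ℓ ≤ pairNorm x Y ^ ℓ :=
              Real.rpow_le_rpow hR0 (le_trans hxR (hpair_ge x)) hℓ
            refine le_trans (hw_ub x) (Real.exp_le_exp.mpr ?_)
            have hRl : R^ℓ = lam^ℓ * S^ℓ := Real.mul_rpow hlam0 hS0
            have hκSle : (κ*S)^ℓ = κ^ℓ * S^ℓ := Real.mul_rpow (by linarith) hS0
            have hc2 : (0:ℝ) < c^2 := by positivity
            have hlamval : 2 * c * (c * κ ^ ℓ + c * G + G / c) =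
                2*c^2*κ^ℓ + 2*c^2*G + 2*G := by
              field_simp
            have hkey : c * (c * ((κ*S)^ℓ + G)) + G ≤ R^ℓ := by
              rw [hRl, hlamL, hlamval, hκSle]
              exact aux_key c G (κ^ℓ) (S^ℓ) hc hG hκl hSl1
            have hq2 : c * (c * ((κ*S)^ℓ + G)) + G ≤ pairNorm x Y ^ ℓ := le_trans hkey hq
            have h5 : α * (c * (c * ((κ*S)^ℓ + G))) ≤ α * (pairNorm x Y ^ ℓ - G) :=
              mul_le_mul_of_nonneg_left (by linarith) hα.le
            rw [neg_le_neg_iff, le_div_iff₀ hc]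
            linarith [h5]
          have hout : ∫ x in Bᶜ, ‖x‖ * w x ∂(ρ m) ≤
              S * Real.exp (-(α * (c * ((κ*S)^ℓ + G)))) := by
            calc ∫ x in Bᶜ, ‖x‖ * w x ∂(ρ m)
                ≤ ∫ x in Bᶜ, Real.exp (-(α * (c * ((κ*S)^ℓ + G)))) * ‖x‖ ∂(ρ m) := by
                  refine setIntegral_mono_on h1int.integrableOn
                    ((hnint m).const_mul _).integrableOn hBmeas.compl fun x hx => ?_
                  calc ‖x‖ * w x ≤ ‖x‖ * Real.exp (-(α * (c * ((κ*S)^ℓ + G)))) :=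
                        mul_le_mul_of_nonneg_left (hKexp x hx) (norm_nonneg x)
                    _ = Real.exp (-(α * (c * ((κ*S)^ℓ + G)))) * ‖x‖ := mul_comm _ _
              _ = Real.exp (-(α * (c * ((κ*S)^ℓ + G)))) * ∫ x in Bᶜ, ‖x‖ ∂(ρ m) :=
                  integral_const_mul _ _
              _ ≤ Real.exp (-(α * (c * ((κ*S)^ℓ + G)))) * ∫ x, ‖x‖ ∂(ρ m) :=
                  mul_le_mul_of_nonneg_left (setIntegral_le_integral (hnint m)
                    (Filter.Eventually.of_forall fun x => norm_nonneg x)) (Real.exp_pos _).le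
              _ ≤ Real.exp (-(α * (c * ((κ*S)^ℓ + G)))) * S :=
                  mul_le_mul_of_nonneg_left (hjS m) (Real.exp_pos _).le
              _ = S * Real.exp (-(α * (c * ((κ*S)^ℓ + G)))) := mul_comm _ _
          have hout2 : ∫ x in Bᶜ, ‖x‖ * w x ∂(ρ m) ≤ 2 * S * D := by
            refine le_trans hout ?_
            have h2D : Real.exp (-(α * (c * ((κ*S)^ℓ + G)))) ≤ 2 * D := by linarith [hDlowS]
            calc S * Real.exp (-(α * (c * ((κ*S)^ℓ + G)))) ≤ S * (2*D) :=
                  mul_le_mul_of_nonneg_left h2D hS0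
              _ = 2*S*D := by ring
          have hfin : N ≤ (lam + 2) * S * D := by
            rw [hsplit]
            calc (∫ x in B, ‖x‖ * w x ∂(ρ m)) + ∫ x in Bᶜ, ‖x‖ * w x ∂(ρ m)
                ≤ R*D + 2*S*D := add_le_add hin hout2
              _ = (lam + 2) * S * D := by rw [hRdef]; ring
          refine hfin.trans ?_
          rw [mul_assoc, mul_assoc]
          exact mul_le_mul_of_nonneg_right (by linarith) (mul_nonneg hS0 hD0)
end
end

section
/- Let λ, σ > 0, let D : ℝ^d → ℝ^{d×d} be Lipschitz continuous with respect to the Frobenius norm and satisfy D(0) = 0, let α > 0, and let E_1,…,E_M satisfy Assumptions (A1) and (A2). For X = (X^{m,i})_{m∈[M], i∈[N]} ∈ ℝ^{M·N·d}, define the drift F(X) ∈ ℝ^{M·N·d} with block components F^{m,i}(X) := −λ (X^{m,i} − X_α^m(ρ^{m,N}, M^{−m})) and the block-diagonal diffusion matrix G(X) with diagonal blocks σ D(X^{m,i} − X_α^m(ρ^{m,N}, M^{−m})), where ρ^{m,N} := (1/N) Σ_{i=1}^N δ_{X^{m,i}} and M^{−m} := (1/N) Σ_{i=1}^N (X^{1,i},…,X^{m−1,i},X^{m+1,i},…,X^{M,i}).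 Then, with φ(x) := |x|², there exists a constant C > 0 such that F(X)·∇φ(X) + (1/2)⟨G(X), ∇²φ(X) G(X)⟩ ≤ |F(X)|² + |X|² + ‖G(X)‖_F² ≤ C φ(X) for all X ∈ ℝ^{M·N·d}, where ⟨·,·⟩ is the Frobenius inner product and ‖·‖_F the Frobenius norm. -/
open MeasureTheory Finset
open scoped ENNReal NNReal

noncomputable section

open scoped RealInnerProductSpace

/-- Frobenius norm of a `d × d` real matrix. -/
def frobNorm {d : ℕ} (A : Matrix (Fin d) (Fin d) ℝ) : ℝ :=
  Real.sqrt (∑ i, ∑ j, (A i j) ^ 2)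

/-- The consensus point of the `m`-th empirical measure of the configuration `X`. -/
def consE {d M N : ℕ} (α : ℝ) (E : Fin (M + 1) → Vec d → Opp M d → ℝ)
    (m : Fin (M + 1)) (X : Fin (M + 1) → Fin N → Vec d) : Vec d :=
  consensus α (E m) (empMeas (X m)) (oppOf m fun l => (N : ℝ)⁻¹ • ∑ i, X l i)

lemma integrable_dirac'' {α : Type*} [MeasurableSpace α] [MeasurableSingletonClass α]
    {E : Type*} [NormedAddCommGroup E] (f : α → E) (a : α) :
    Integrable f (Measure.dirac a) := by
  have h : f =ᵐ[Measure.dirac a] fun _ => f a := by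
    rw [MeasureTheory.ae_dirac_eq]
    exact Filter.eventually_pure.2 rfl
  exact (integrable_const (f a)).congr h.symm

lemma integral_empMeas' {α : Type*} [MeasurableSpace α] [MeasurableSingletonClass α]
    {E : Type*} [NormedAddCommGroup E] [NormedSpace ℝ E] [CompleteSpace E] {N : ℕ}
    (X : Fin N → α) (f : α → E) :
    (∫ x, f x ∂((N : ℝ≥0∞)⁻¹ • ∑ i, Measure.dirac (X i))) = (N : ℝ)⁻¹ • ∑ i, f (X i) := by
  rw [integral_smul_measure, integral_finset_sum_measure (fun i _ => integrable_dirac'' f (X i))]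
  simp [MeasureTheory.integral_dirac, ENNReal.toReal_inv]

lemma norm_consensus_emp {d M N : ℕ} (hN : 0 < N) (α : ℝ) (Em : Vec d → Opp M d → ℝ)
    (X : Fin N → Vec d) (Y : Opp M d) {B : ℝ} (hB : ∀ i, ‖X i‖ ≤ B) :
    ‖consensus α Em (empMeas X) Y‖ ≤ B := by
  have hI1 : (∫ x, Real.exp (-α * Em x Y) ∂empMeas X)
      = (N : ℝ)⁻¹ • ∑ i, Real.exp (-α * Em (X i) Y) := integral_empMeas' X _
  have hI2 : (∫ x, Real.exp (-α * Em x Y) • x ∂empMeas X)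
      = (N : ℝ)⁻¹ • ∑ i, Real.exp (-α * Em (X i) Y) • X i := integral_empMeas' X _
  set w : Fin N → ℝ := fun i => Real.exp (-α * Em (X i) Y) with hw
  have hwpos : ∀ i, 0 < w i := fun i => Real.exp_pos _
  have hS : 0 < ∑ i, w i :=
    Finset.sum_pos (fun i _ => hwpos i) ⟨⟨0, hN⟩, Finset.mem_univ _⟩
  have hNpos : (0 : ℝ) < (N : ℝ) := by exact_mod_cast hN
  rw [consensus, hI1, hI2]
  have hcol : ((N : ℝ)⁻¹ • ∑ i, w i)⁻¹ • ((N : ℝ)⁻¹ • ∑ i, w i • X i)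
      = (∑ i, w i)⁻¹ • ∑ i, w i • X i := by
    rw [smul_eq_mul, smul_smul, mul_inv_rev, mul_assoc, inv_mul_cancel₀ (by positivity),
      mul_one]
  rw [hcol, norm_smul, norm_inv, Real.norm_eq_abs, abs_of_pos hS]
  have hv : ‖∑ i, w i • X i‖ ≤ (∑ i, w i) * B := by
    calc ‖∑ i, w i • X i‖ ≤ ∑ i, ‖w i • X i‖ := norm_sum_le _ _
      _ ≤ ∑ i, w i * B := by
          refine Finset.sum_le_sum fun i _ => ?_
          rw [norm_smul, Real.norm_eq_abs, abs_of_pos (hwpos i)]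
          exact mul_le_mul_of_nonneg_left (hB i) (hwpos i).le
      _ = (∑ i, w i) * B := by rw [Finset.sum_mul]
  calc (∑ i, w i)⁻¹ * ‖∑ i, w i • X i‖ ≤ (∑ i, w i)⁻¹ * ((∑ i, w i) * B) :=
        mul_le_mul_of_nonneg_left hv (inv_nonneg.2 hS.le)
    _ = B := by field_simp

lemma frobNorm_nonneg' {d : ℕ} (A : Matrix (Fin d) (Fin d) ℝ) : 0 ≤ frobNorm A :=
  Real.sqrt_nonneg _

lemma frobNorm_smul' {d : ℕ} (c : ℝ) (A : Matrix (Fin d) (Fin d) ℝ) :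
    frobNorm (c • A) = |c| * frobNorm A := by
  unfold frobNorm
  rw [← Real.sqrt_sq_eq_abs, ← Real.sqrt_mul (sq_nonneg c)]
  congr 1
  rw [Finset.mul_sum]
  refine Finset.sum_congr rfl fun i _ => ?_
  rw [Finset.mul_sum]
  refine Finset.sum_congr rfl fun j _ => ?_
  simp [Matrix.smul_apply, mul_pow]

/-- Lyapunov condition for the CBO particle system. -/
theorem stmt8 {d N M : ℕ} (hd : 0 < d) (hN : 0 < N)
    (lam sig : ℝ) (hlam : 0 < lam) (hsig : 0 < sig)
    (D : Vec d → Matrix (Fin d) (Fin d) ℝ)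
    (L : ℝ) (hL : 0 ≤ L)
    (hLip : ∀ x y : Vec d, frobNorm (D x - D y) ≤ L * ‖x - y‖)
    (hD0 : D 0 = 0)
    (α : ℝ) (hα : 0 < α)
    (E : Fin (M + 1) → Vec d → Opp M d → ℝ)
    -- Assumption (A1)
    (C₁ s : ℝ) (hC₁ : 0 < C₁) (hs : 0 ≤ s)
    (hA1 : ∀ (m : Fin (M + 1)) (x₀ x₁ : Vec d) (y₀ y₁ : Opp M d),
      |E m x₀ y₀ - E m x₁ y₁| ≤
        C₁ * (1 + pairNorm x₀ y₀ + pairNorm x₁ y₁) ^ s * pairNorm (x₀ - x₁) (y₀ - y₁))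
    -- Assumption (A2)
    (ℓ c G : ℝ) (hℓ : 0 ≤ ℓ) (hc : 0 < c) (hG : 0 < G)
    (hA2 : ∀ (m : Fin (M + 1)) (x : Vec d) (y : Opp M d),
      (1 / c) * (pairNorm x y ^ ℓ - G) ≤ E m x y ∧ E m x y ≤ c * (pairNorm x y ^ ℓ + G)) :
    ∃ C > (0 : ℝ), ∀ X : Fin (M + 1) → Fin N → Vec d,
      -- `F(X)·∇φ(X) + (1/2)⟨G(X), ∇²φ(X) G(X)⟩ ≤ |F(X)|² + |X|² + ‖G(X)‖_F²`
      ((∑ m, ∑ i, ⟪(-lam) • (X m i - consE α E m X), (2 : ℝ) • X m i⟫) +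
          ∑ m, ∑ i, frobNorm (sig • D (X m i - consE α E m X)) ^ 2
        ≤ (∑ m, ∑ i, ‖(-lam) • (X m i - consE α E m X)‖ ^ 2) + confNorm X ^ 2 +
            ∑ m, ∑ i, frobNorm (sig • D (X m i - consE α E m X)) ^ 2) ∧
      -- `|F(X)|² + |X|² + ‖G(X)‖_F² ≤ C φ(X)`
      ((∑ m, ∑ i, ‖(-lam) • (X m i - consE α E m X)‖ ^ 2) + confNorm X ^ 2 +
          ∑ m, ∑ i, frobNorm (sig • D (X m i - consE α E m X)) ^ 2
        ≤ C * confNorm X ^ 2) := by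
  set A : ℝ := ((M : ℝ) + 1) * (N : ℝ) with hA
  have hApos : 0 < A := by
    have : (0:ℝ) < (N:ℝ) := by exact_mod_cast hN
    positivity
  refine ⟨4 * lam ^ 2 * A + 1 + 4 * sig ^ 2 * L ^ 2 * A, by positivity, fun X => ?_⟩
  set K : ℝ := confNorm X with hKdef
  have hKnn : 0 ≤ K := Real.sqrt_nonneg _
  have hK2 : K ^ 2 = ∑ m, ∑ i, ‖X m i‖ ^ 2 := by
    rw [hKdef, confNorm, Real.sq_sqrt (by positivity)]
  have hXle : ∀ m i, ‖X m i‖ ≤ K := by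
    intro m i
    have h1 : ‖X m i‖ ^ 2 ≤ ∑ m, ∑ i, ‖X m i‖ ^ 2 := by
      calc ‖X m i‖ ^ 2 ≤ ∑ i, ‖X m i‖ ^ 2 :=
            Finset.single_le_sum (f := fun i => ‖X m i‖ ^ 2)
              (fun j _ => sq_nonneg _) (Finset.mem_univ i)
        _ ≤ ∑ m, ∑ i, ‖X m i‖ ^ 2 :=
            Finset.single_le_sum (f := fun m => ∑ i, ‖X m i‖ ^ 2)
              (fun j _ => Finset.sum_nonneg fun i _ => sq_nonneg _) (Finset.mem_univ m)
    calc ‖X m i‖ = Real.sqrt (‖X m i‖ ^ 2) := (Real.sqrt_sq (norm_nonneg _)).symm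
      _ ≤ K := by rw [hKdef, confNorm]; exact Real.sqrt_le_sqrt h1
  have hcons : ∀ m, ‖consE α E m X‖ ≤ K := by
    intro m
    exact norm_consensus_emp hN α (E m) (X m) _ (fun i => hXle m i)
  have hdiff : ∀ m i, ‖X m i - consE α E m X‖ ≤ 2 * K := by
    intro m i
    calc ‖X m i - consE α E m X‖ ≤ ‖X m i‖ + ‖consE α E m X‖ := norm_sub_le _ _
      _ ≤ 2 * K := by have := hXle m i; have := hcons m; linarith
  constructor
  · have hmain : (∑ m, ∑ i, ⟪(-lam) • (X m i - consE α E m X), (2 : ℝ) • X m i⟫)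
        ≤ (∑ m, ∑ i, ‖(-lam) • (X m i - consE α E m X)‖ ^ 2) + K ^ 2 := by
      rw [hK2, ← Finset.sum_add_distrib]
      refine Finset.sum_le_sum fun m _ => ?_
      rw [← Finset.sum_add_distrib]
      refine Finset.sum_le_sum fun i _ => ?_
      set f := (-lam) • (X m i - consE α E m X)
      have h1 : ⟪f, (2:ℝ) • X m i⟫ = 2 * ⟪f, X m i⟫ := real_inner_smul_right _ _ _
      have h2 : ⟪f, X m i⟫ ≤ ‖f‖ * ‖X m i‖ := real_inner_le_norm _ _
      nlinarith [sq_nonneg (‖f‖ - ‖X m i‖)]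
    linarith
  · have h1 : (∑ m, ∑ i, ‖(-lam) • (X m i - consE α E m X)‖ ^ 2)
        ≤ A * (lam ^ 2 * (2 * K) ^ 2) := by
      calc (∑ m, ∑ i, ‖(-lam) • (X m i - consE α E m X)‖ ^ 2)
          ≤ ∑ _m : Fin (M + 1), ∑ _i : Fin N, lam ^ 2 * (2 * K) ^ 2 := by
            refine Finset.sum_le_sum fun m _ => Finset.sum_le_sum fun i _ => ?_
            rw [norm_smul, Real.norm_eq_abs, abs_neg, abs_of_pos hlam, mul_pow]
            exact mul_le_mul_of_nonneg_left
              (pow_le_pow_left₀ (norm_nonneg _) (hdiff m i) 2) (sq_nonneg lam)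
        _ = A * (lam ^ 2 * (2 * K) ^ 2) := by
            simp [Finset.sum_const, Finset.card_univ, nsmul_eq_mul, hA]
            push_cast
            ring
    have h2 : (∑ m, ∑ i, frobNorm (sig • D (X m i - consE α E m X)) ^ 2)
        ≤ A * (sig ^ 2 * L ^ 2 * (2 * K) ^ 2) := by
      calc (∑ m, ∑ i, frobNorm (sig • D (X m i - consE α E m X)) ^ 2)
          ≤ ∑ _m : Fin (M + 1), ∑ _i : Fin N, sig ^ 2 * L ^ 2 * (2 * K) ^ 2 := by
            refine Finset.sum_le_sum fun m _ => Finset.sum_le_sum fun i _ => ?_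
            set v := X m i - consE α E m X
            have hfD : frobNorm (D v) ≤ L * ‖v‖ := by
              have := hLip v 0
              rwa [hD0, sub_zero, sub_zero] at this
            have hfn : 0 ≤ frobNorm (D v) := frobNorm_nonneg' _
            have hvK : ‖v‖ ≤ 2 * K := hdiff m i
            have hvn : (0:ℝ) ≤ ‖v‖ := norm_nonneg _
            rw [frobNorm_smul', mul_pow, sq_abs]
            have h3 : frobNorm (D v) ≤ L * (2 * K) :=
              hfD.trans (mul_le_mul_of_nonneg_left hvK hL)
            have hq : frobNorm (D v) ^ 2 ≤ (L * (2 * K)) ^ 2 := pow_le_pow_left₀ hfn h3 2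
            calc sig ^ 2 * frobNorm (D v) ^ 2 ≤ sig ^ 2 * (L * (2 * K)) ^ 2 :=
                  mul_le_mul_of_nonneg_left hq (sq_nonneg sig)
              _ = sig ^ 2 * L ^ 2 * (2 * K) ^ 2 := by ring
        _ = A * (sig ^ 2 * L ^ 2 * (2 * K) ^ 2) := by
            simp [Finset.sum_const, Finset.card_univ, nsmul_eq_mul, hA]
            push_cast
            ring
    have hKc : confNorm X ^ 2 = K ^ 2 := by rw [hKdef]
    rw [hKc]
    have e1 : A * (lam ^ 2 * (2 * K) ^ 2) = 4 * lam ^ 2 * A * K ^ 2 := by ring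
    have e2 : A * (sig ^ 2 * L ^ 2 * (2 * K) ^ 2) = 4 * sig ^ 2 * L ^ 2 * A * K ^ 2 := by ring
    have e3 : (4 * lam ^ 2 * A + 1 + 4 * sig ^ 2 * L ^ 2 * A) * K ^ 2
        = 4 * lam ^ 2 * A * K ^ 2 + K ^ 2 + 4 * sig ^ 2 * L ^ 2 * A * K ^ 2 := by ring
    linarith
end
end
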